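/- Let X be a reflexive real Banach space (i.e. the canonical inclusion of X into its double dual is surjective), let f : X → ℝ be of class C¹, and let C be a closed convex subset of X. Assume that the derivative f' is of class (S)_+ on C. Then any bounded sequence (u_k) in C with ‖f'(u_k)‖ → 0 admits a subsequence converging in norm. -/

import Mathlib

open Filter Topology NormedSpace


/-- A continuous linear functional bounded above on a submodule vanishes on it. -/
lemma zero_on_submodule {X : Type*} [NormedAddCommGroup X] [NormedSpace ℝ X]
    (p : Submodule ℝ X) (g : X →L[ℝ] ℝ) {c : ℝ} (h : ∀ a ∈ p, g a < c) :
    ∀ a ∈ p, g a = 0 := by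
  intro a ha
  by_contra h0
  have hmem : ((c + |c| + 1) / g a) • a ∈ p := p.smul_mem _ ha
  have := h _ hmem
  rw [map_smul] at this
  rw [smul_eq_mul, div_mul_cancel₀ _ h0] at this
  have : c + |c| + 1 < c := this
  nlinarith [abs_nonneg c, le_abs_self c]

/-- Separation of a point from a closed submodule. -/
lemma exists_functional_of_not_mem {X : Type*} [NormedAddCommGroup X] [NormedSpace ℝ X]
    (p : Submodule ℝ X) (hp : IsClosed (p : Set X)) {x : X} (hx : x ∉ p) :
    ∃ g : X →L[ℝ] ℝ, (∀ a ∈ p, g a = 0) ∧ g x ≠ 0 := by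
  obtain ⟨g, c, hgp, hgx⟩ := geometric_hahn_banach_closed_point p.convex hp hx
  have h0 : ∀ a ∈ p, g a = 0 := zero_on_submodule p g hgp
  refine ⟨g, h0, ?_⟩
  have h0' : g (0 : X) < c := hgp 0 p.zero_mem
  rw [map_zero] at h0'
  linarith

/-- The restriction map from the dual of `X` to the dual of a submodule, bundled. -/
noncomputable def restrictDual {X : Type*} [NormedAddCommGroup X] [NormedSpace ℝ X]
    (p : Submodule ℝ X) : StrongDual ℝ X →L[ℝ] StrongDual ℝ p :=
  LinearMap.mkContinuous
    { toFun := fun (φ : StrongDual ℝ X) => φ.comp p.subtypeL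
      map_add' := fun φ ψ => by ext x; simp
      map_smul' := fun c φ => by ext x; simp } 1
    (fun φ => by
      simp only [LinearMap.coe_mk, AddHom.coe_mk, one_mul]
      refine ContinuousLinearMap.opNorm_le_bound _ (norm_nonneg φ) (fun x => ?_)
      simpa using φ.le_opNorm (x : X))

lemma restrictDual_apply {X : Type*} [NormedAddCommGroup X] [NormedSpace ℝ X]
    (p : Submodule ℝ X) (φ : StrongDual ℝ X) (x : p) : restrictDual p φ x = φ x := rfl

/-- A closed submodule of a reflexive space is reflexive. -/
lemma surjective_inclusion_of_closed {X : Type*} [NormedAddCommGroup X] [NormedSpace ℝ X]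
    (hrefl : Function.Surjective (inclusionInDoubleDual ℝ X))
    (p : Submodule ℝ X) (hp : IsClosed (p : Set X)) :
    Function.Surjective (inclusionInDoubleDual ℝ p) := by
  intro y
  set x'' : StrongDual ℝ (StrongDual ℝ X) := y.comp (restrictDual p) with hx''
  obtain ⟨x, hx⟩ := hrefl x''
  have hxφ : ∀ φ : StrongDual ℝ X, φ x = y (restrictDual p φ) := by
    intro φ
    have := congrFun (congrArg DFunLike.coe hx) φ
    simpa [dual_def, hx''] using this
  have hxp : x ∈ p := by
    by_contra hxp
    obtain ⟨g, hg0, hgx⟩ := exists_functional_of_not_mem p hp hxp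
    have hR : restrictDual p g = 0 := by
      ext a; exact hg0 a a.2
    have := hxφ g
    rw [hR, map_zero] at this
    exact hgx this
  refine ⟨⟨x, hxp⟩, ?_⟩
  ext ψ
  obtain ⟨φ, hφext, -⟩ := exists_extension_norm_eq p ψ
  have hRψ : restrictDual p φ = ψ := by
    ext a; exact hφext a
  rw [dual_def, ← hRψ, restrictDual_apply, hxφ φ, hRψ]
/-- A normed space whose dual is separable is itself separable. -/
lemma separable_of_dual_separable (E : Type*) [NormedAddCommGroup E] [NormedSpace ℝ E]
    [TopologicalSpace.SeparableSpace (StrongDual ℝ E)] : TopologicalSpace.SeparableSpace E := by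
  have : Nonempty (StrongDual ℝ E) := ⟨0⟩
  set e : ℕ → StrongDual ℝ E := TopologicalSpace.denseSeq (StrongDual ℝ E) with he
  have hdense : DenseRange e := TopologicalSpace.denseRange_denseSeq _
  -- choose witnessing vectors
  have hch : ∀ n : ℕ, ∃ x : E, ‖x‖ ≤ 1 ∧ ‖e n‖ / 2 ≤ (e n) x := by
    intro n
    rcases eq_or_ne (e n) 0 with h0 | h0
    · exact ⟨0, by simp, by simp [h0]⟩
    · have hlt : ‖e n‖ / 2 < ‖e n‖ := by
        have : 0 < ‖e n‖ := norm_pos_iff.mpr h0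
        linarith
      obtain ⟨x, hx1, hx2⟩ := (e n).exists_lt_apply_of_lt_opNorm hlt
      rcases le_or_gt 0 ((e n) x) with hpos | hneg
      · exact ⟨x, hx1.le, by rw [Real.norm_eq_abs, abs_of_nonneg hpos] at hx2; linarith⟩
      · refine ⟨-x, by simpa using hx1.le, ?_⟩
        rw [map_neg]
        rw [Real.norm_eq_abs, abs_of_neg hneg] at hx2
        linarith
  choose xv hxv1 hxv2 using hch
  set S : Submodule ℝ E := (Submodule.span ℝ (Set.range xv)).topologicalClosure with hS
  have hScl : IsClosed (S : Set E) := Submodule.isClosed_topologicalClosure _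
  have hStop : S = ⊤ := by
    by_contra hne
    obtain ⟨z, hz⟩ : ∃ z : E, z ∉ S := by
      by_contra h
      push_neg at h
      exact hne (Submodule.eq_top_iff'.mpr h)
    obtain ⟨g, hg0, hgz⟩ := exists_functional_of_not_mem S hScl hz
    have hgpos : 0 < ‖g‖ := norm_pos_iff.mpr (fun h => hgz (by simp [h]))
    obtain ⟨n, hn⟩ := Metric.denseRange_iff.mp hdense g (‖g‖ / 3) (by linarith)
    have hxS : ∀ m, xv m ∈ S := fun m =>
      Submodule.le_topologicalClosure _ (Submodule.subset_span ⟨m, rfl⟩)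
    have hgen : ‖e n - g‖ < ‖g‖ / 3 := by
      rw [← dist_eq_norm]; rw [dist_comm]; exact hn
    have hne_norm : 2 * ‖g‖ / 3 ≤ ‖e n‖ := by
      have := norm_sub_norm_le (e n - g) (- g)
      simp only [sub_neg_eq_add, sub_add_cancel] at this
      have h2 : ‖e n‖ ≥ ‖g‖ - ‖e n - g‖ := by
        have := norm_sub_norm_le g (g - e n)
        simp only [sub_sub_cancel] at this
        rw [norm_sub_rev] at this
        linarith
      linarith
    have hlow : ‖g‖ / 3 ≤ (e n) (xv n) := le_trans (by linarith) (hxv2 n)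
    have hup : (e n) (xv n) < ‖g‖ / 3 := by
      have hgx : g (xv n) = 0 := hg0 _ (hxS n)
      have : ‖(e n - g) (xv n)‖ ≤ ‖e n - g‖ * ‖xv n‖ := (e n - g).le_opNorm _
      have hb : ‖(e n - g) (xv n)‖ < ‖g‖ / 3 := by
        calc ‖(e n - g) (xv n)‖ ≤ ‖e n - g‖ * ‖xv n‖ := this
          _ ≤ ‖e n - g‖ * 1 := by
              exact mul_le_mul_of_nonneg_left (hxv1 n) (norm_nonneg _)
          _ < ‖g‖ / 3 := by rw [mul_one]; exact hgen
      have : (e n) (xv n) ≤ ‖(e n - g) (xv n)‖ := by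
        simp only [ContinuousLinearMap.sub_apply, hgx, sub_zero]
        exact le_abs_self _
      linarith
    linarith
  -- conclude separability
  have hsep : TopologicalSpace.IsSeparable (S : Set E) := by
    apply TopologicalSpace.IsSeparable.closure
    exact TopologicalSpace.IsSeparable.span ((Set.countable_range xv).isSeparable)
  rw [hStop] at hsep
  have : TopologicalSpace.IsSeparable (Set.univ : Set E) := by
    simpa using hsep
  exact TopologicalSpace.isSeparable_univ_iff.mp this
/-- Bolzano–Weierstrass diagonal: a pointwise bounded sequence of functions `ℕ → ℝ`
has a pointwise convergent subsequence. -/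
lemma exists_subseq_tendsto_pointwise (c : ℕ → ℝ) (F : ℕ → ℕ → ℝ)
    (h : ∀ k n, |F k n| ≤ c n) :
    ∃ σ : ℕ → ℕ, StrictMono σ ∧ ∃ g : ℕ → ℝ,
      ∀ n, Tendsto (fun k => F (σ k) n) atTop (𝓝 (g n)) := by
  set S : Set (ℕ → ℝ) := Set.pi Set.univ (fun n => Set.Icc (-(c n)) (c n)) with hSdef
  have hcomp : IsCompact S := isCompact_univ_pi (fun n => isCompact_Icc)
  have hmem : ∀ k, F k ∈ S := by
    intro k n _
    exact abs_le.mp (h k n)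
  obtain ⟨g, -, σ, hσ, hconv⟩ := hcomp.tendsto_subseq hmem
  refine ⟨σ, hσ, g, fun n => ?_⟩
  have := tendsto_pi_nhds.mp hconv n
  exact this
/-- Weak sequential compactness of bounded sequences in a reflexive space. -/
lemma exists_weak_convergent_subseq {X : Type*} [NormedAddCommGroup X] [NormedSpace ℝ X]
    (hrefl : Function.Surjective (inclusionInDoubleDual ℝ X))
    (u : ℕ → X) (M : ℝ) (hM : ∀ k, ‖u k‖ ≤ M) :
    ∃ σ : ℕ → ℕ, StrictMono σ ∧ ∃ w : X,
      ∀ φ : X →L[ℝ] ℝ, Tendsto (fun k => φ (u (σ k))) atTop (𝓝 (φ w)) := by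
  have hM0 : 0 ≤ M := le_trans (norm_nonneg (u 0)) (hM 0)
  set Y : Submodule ℝ X := (Submodule.span ℝ (Set.range u)).topologicalClosure with hY
  have hYcl : IsClosed (Y : Set X) := Submodule.isClosed_topologicalClosure _
  have hmem : ∀ k, u k ∈ Y := fun k =>
    Submodule.le_topologicalClosure _ (Submodule.subset_span ⟨k, rfl⟩)
  set v : ℕ → Y := fun k => ⟨u k, hmem k⟩ with hv
  have hvM : ∀ k, ‖v k‖ ≤ M := fun k => hM k
  haveI : TopologicalSpace.SeparableSpace ↥Y := by
    have h1 : TopologicalSpace.IsSeparable (Y : Set X) := by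
      apply TopologicalSpace.IsSeparable.closure
      exact TopologicalSpace.IsSeparable.span ((Set.countable_range u).isSeparable)
    exact h1.separableSpace
  have hrefY := surjective_inclusion_of_closed hrefl Y hYcl
  haveI : TopologicalSpace.SeparableSpace (StrongDual ℝ (StrongDual ℝ ↥Y)) :=
    hrefY.denseRange.separableSpace (inclusionInDoubleDual ℝ ↥Y).continuous
  haveI : TopologicalSpace.SeparableSpace (StrongDual ℝ ↥Y) := separable_of_dual_separable (StrongDual ℝ ↥Y)
  haveI : Nonempty (StrongDual ℝ ↥Y) := ⟨0⟩
  set e : ℕ → StrongDual ℝ ↥Y := TopologicalSpace.denseSeq (StrongDual ℝ ↥Y) with he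
  have hdense : DenseRange e := TopologicalSpace.denseRange_denseSeq _
  obtain ⟨σ, hσ, g, hg⟩ := exists_subseq_tendsto_pointwise (fun n => ‖e n‖ * M)
      (fun k n => e n (v k)) (by
        intro k n
        calc |e n (v k)| ≤ ‖e n‖ * ‖v k‖ := (e n).le_opNorm _
          _ ≤ ‖e n‖ * M := mul_le_mul_of_nonneg_left (hvM k) (norm_nonneg (e n)))
  have key : ∀ ψ : StrongDual ℝ ↥Y, ∃ l, Tendsto (fun k => ψ (v (σ k))) atTop (𝓝 l) := by
    intro ψ
    apply cauchySeq_tendsto_of_complete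
    rw [Metric.cauchySeq_iff]
    intro ε hε
    obtain ⟨n, hn⟩ := Metric.denseRange_iff.mp hdense ψ (ε / (3 * (M + 1)))
      (by positivity)
    have hcs : CauchySeq (fun k => e n (v (σ k))) := (hg n).cauchySeq
    obtain ⟨N, hN⟩ := Metric.cauchySeq_iff.mp hcs (ε / 3) (by linarith)
    refine ⟨N, fun i hi j hj => ?_⟩
    have hsmall : ∀ k, |ψ (v (σ k)) - e n (v (σ k))| ≤ ε / 3 := by
      intro k
      have h1 : |(ψ - e n) (v (σ k))| ≤ ‖ψ - e n‖ * ‖v (σ k)‖ := (ψ - e n).le_opNorm _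
      have h2 : ‖ψ - e n‖ < ε / (3 * (M + 1)) := by
        exact lt_of_eq_of_lt (dist_eq_norm ψ (e n)).symm hn
      have h3 : ‖ψ - e n‖ * ‖v (σ k)‖ ≤ (ε / (3 * (M + 1))) * (M + 1) := by
        apply mul_le_mul h2.le (le_trans (hvM _) (by linarith)) (norm_nonneg _)
        positivity
      have h4 : (ε / (3 * (M + 1))) * (M + 1) = ε / 3 := by
        field_simp
      simpa [ContinuousLinearMap.sub_apply] using le_trans h1 (h4 ▸ h3)
    have hdij : dist (e n (v (σ i))) (e n (v (σ j))) < ε / 3 := hN i hi j hj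
    rw [Real.dist_eq] at hdij ⊢
    have := hsmall i
    have := hsmall j
    have habs : |ψ (v (σ i)) - ψ (v (σ j))| ≤
        |ψ (v (σ i)) - e n (v (σ i))| + |e n (v (σ i)) - e n (v (σ j))|
        + |e n (v (σ j)) - ψ (v (σ j))| := by
      have := abs_sub_abs_le_abs_sub (ψ (v (σ i))) (ψ (v (σ j)))
      calc |ψ (v (σ i)) - ψ (v (σ j))|
          = |(ψ (v (σ i)) - e n (v (σ i))) + (e n (v (σ i)) - e n (v (σ j)))
              + (e n (v (σ j)) - ψ (v (σ j)))| := by ring_nf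
        _ ≤ _ := by
            refine le_trans (abs_add_le _ _) ?_
            gcongr
            exact abs_add_le _ _
    have hji : |e n (v (σ j)) - ψ (v (σ j))| ≤ ε / 3 := by
      rw [abs_sub_comm]; exact hsmall j
    linarith [hsmall i]
  choose Lf hLf using key
  have hLadd : ∀ ψ ψ' : StrongDual ℝ ↥Y, Lf (ψ + ψ') = Lf ψ + Lf ψ' := by
    intro ψ ψ'
    refine tendsto_nhds_unique ?_ ((hLf ψ).add (hLf ψ'))
    simpa [ContinuousLinearMap.add_apply] using hLf (ψ + ψ')
  have hLsmul : ∀ (c : ℝ) (ψ : StrongDual ℝ ↥Y), Lf (c • ψ) = c * Lf ψ := by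
    intro c ψ
    refine tendsto_nhds_unique ?_ ((hLf ψ).const_mul c)
    simpa [ContinuousLinearMap.smul_apply, smul_eq_mul] using hLf (c • ψ)
  set L : StrongDual ℝ (StrongDual ℝ ↥Y) := LinearMap.mkContinuous
    { toFun := Lf
      map_add' := hLadd
      map_smul' := by intro c ψ; simpa using hLsmul c ψ } M
    (by
      intro ψ
      simp only [LinearMap.coe_mk, AddHom.coe_mk]
      have : Tendsto (fun k => ‖ψ (v (σ k))‖) atTop (𝓝 ‖Lf ψ‖) := (hLf ψ).norm
      refine le_of_tendsto this (Eventually.of_forall (fun k => ?_))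
      calc ‖ψ (v (σ k))‖ ≤ ‖ψ‖ * ‖v (σ k)‖ := ψ.le_opNorm _
        _ ≤ ‖ψ‖ * M := mul_le_mul_of_nonneg_left (hvM _) (norm_nonneg ψ)
        _ = M * ‖ψ‖ := mul_comm _ _) with hLdef
  obtain ⟨w', hw'⟩ := hrefY L
  have hw'' : ∀ ψ : StrongDual ℝ ↥Y, ψ w' = Lf ψ := by
    intro ψ
    have := congrFun (congrArg DFunLike.coe hw') ψ
    simpa [dual_def, hLdef, LinearMap.mkContinuous_apply] using this
  refine ⟨σ, hσ, (w' : X), fun φ => ?_⟩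
  have heq : ∀ k, φ (u (σ k)) = (restrictDual Y φ) (v (σ k)) := fun k => rfl
  have heq2 : φ (w' : X) = (restrictDual Y φ) w' := rfl
  simp only [heq, heq2, hw'']
  exact hLf _

/-- Let `X` be a reflexive real Banach space, `f : X → ℝ` of class `C¹`
with derivative `f'`, and `C` a closed convex subset of `X` such that `f'` is of class
`(S)₊` on `C`.  Then any bounded sequence `(u k)` in `C` with `‖f' (u k)‖ → 0` admits a
subsequence converging in norm. -/
theorem stmt_2
    {X : Type*} [NormedAddCommGroup X] [NormedSpace ℝ X] [CompleteSpace X]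
    (hrefl : Function.Surjective (NormedSpace.inclusionInDoubleDual ℝ X))
    (f : X → ℝ) (f' : X → (X →L[ℝ] ℝ))
    (hdiff : ∀ x, HasFDerivAt f (f' x) x) (hf'cont : Continuous f')
    (C : Set X) (hCcl : IsClosed C) (hCcv : Convex ℝ C)
    (hSplus : ∀ (v : ℕ → X), (∀ k, v k ∈ C) → ∀ w : X,
        (∀ φ : X →L[ℝ] ℝ, Tendsto (fun k => φ (v k)) atTop (𝓝 (φ w))) →
        limsup (fun k => ((f' (v k)) (v k - w) : EReal)) atTop ≤ 0 →
        Tendsto (fun k => ‖v k - w‖) atTop (𝓝 0))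
    (u : ℕ → X) (hu : ∀ k, u k ∈ C)
    (hbdd : ∃ M : ℝ, ∀ k, ‖u k‖ ≤ M)
    (hf'0 : Tendsto (fun k => ‖f' (u k)‖) atTop (𝓝 0)) :
    ∃ σ : ℕ → ℕ, StrictMono σ ∧ ∃ w : X, Tendsto (fun k => u (σ k)) atTop (𝓝 w) := by
  obtain ⟨M, hM⟩ := hbdd
  obtain ⟨σ, hσ, w, hweak⟩ := exists_weak_convergent_subseq hrefl u M hM
  have hσtop : Tendsto σ atTop atTop := hσ.tendsto_atTop
  have hnorm0 : Tendsto (fun k => ‖f' (u (σ k))‖) atTop (𝓝 0) := hf'0.comp hσtop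
  have hr : Tendsto (fun k => (f' (u (σ k))) (u (σ k) - w)) atTop (𝓝 0) := by
    refine squeeze_zero_norm (a := fun k => ‖f' (u (σ k))‖ * (M + ‖w‖)) (fun k => ?_) ?_
    · calc ‖(f' (u (σ k))) (u (σ k) - w)‖ ≤ ‖f' (u (σ k))‖ * ‖u (σ k) - w‖ :=
          (f' (u (σ k))).le_opNorm _
        _ ≤ ‖f' (u (σ k))‖ * (M + ‖w‖) := by
            apply mul_le_mul_of_nonneg_left _ (norm_nonneg _)
            calc ‖u (σ k) - w‖ ≤ ‖u (σ k)‖ + ‖w‖ := norm_sub_le _ _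
              _ ≤ M + ‖w‖ := by linarith [hM (σ k)]
    · simpa using hnorm0.mul_const (M + ‖w‖)
  have hlim : limsup (fun k => ((f' (u (σ k))) (u (σ k) - w) : EReal)) atTop ≤ 0 := by
    have ht : Tendsto (fun k => ((f' (u (σ k))) (u (σ k) - w) : EReal)) atTop (𝓝 (0 : EReal)) := by
      have := EReal.tendsto_coe.mpr hr
      simpa using this
    exact le_of_eq ht.limsup_eq
  have hfin := hSplus (fun k => u (σ k)) (fun k => hu _) w hweak hlim
  refine ⟨σ, hσ, w, ?_⟩
  rw [tendsto_iff_norm_sub_tendsto_zero]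
  exact hfin
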